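/- If C is a linear code over R = F_p[u,v]/⟨u^k, v², uv−vu⟩ of length n, cardinality p^m, and minimum Lee weight d, then its image φ_L(C) under the Gray map is a p-ary linear code of length 2kn, dimension m, and minimum Hamming distance d. -/
import Mathlib


set_option synthInstance.maxHeartbeats 1000000

open Polynomial

/-- The ring `F_p[u,v]/⟨u^k, v²⟩` (the variables commute, so `uv - vu = 0` is automatic). -/
abbrev Rbase (p k : ℕ) : Type :=
  MvPolynomial (Fin 2) (ZMod p) ⧸
    Ideal.span {(MvPolynomial.X 0 : MvPolynomial (Fin 2) (ZMod p)) ^ k, MvPolynomial.X 1 ^ 2}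

/-- The Hamming weight of a Gray image: the number of nonzero entries of
`(i,j) ↦ φL (c i) j ∈ F_p^{2kn}`. -/
noncomputable def grayWt (p k n : ℕ) (φL : Rbase p k →ₗ[ZMod p] (Fin (2 * k) → ZMod p))
    (c : Fin n → Rbase p k) : ℕ :=
  ∑ i : Fin n, (Finset.univ.filter fun j : Fin (2 * k) => φL (c i) j ≠ 0).card

/-- if `C` is a linear code of length `n` over `F_p[u,v]/⟨u^k,v²,uv−vu⟩`
of size `p^m` and minimum Lee weight `d` (the Lee weight being the Hamming weight of the
Gray image under the injective `F_p`-linear Gray map `φ_L : R → F_p^{2k}`), then the Gray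
image `φ_L(C)` is a `p`-ary linear code of length `2kn`, dimension `m`, and minimum
Hamming distance `d`. -/
theorem stmt17 (p k n m d : ℕ) [Fact p.Prime] (hk : 0 < k) (hn : 0 < n)
    (φL : Rbase p k →ₗ[ZMod p] (Fin (2 * k) → ZMod p))
    (hφ : Function.Injective φL)
    (C : Submodule (Rbase p k) (Fin n → Rbase p k))
    (hcard : Nat.card C = p ^ m)
    (hd : IsLeast {w | ∃ c ∈ C, c ≠ 0 ∧ w = grayWt p k n φL c} d) :
    ∃ D : Submodule (ZMod p) (Fin n → Fin (2 * k) → ZMod p),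
      (D : Set (Fin n → Fin (2 * k) → ZMod p))
        = (fun c : Fin n → Rbase p k => fun i j => φL (c i) j) '' (C : Set _) ∧
      Module.finrank (ZMod p) D = m ∧
      IsLeast {w | ∃ y ∈ D, y ≠ 0 ∧
        w = ∑ i : Fin n, (Finset.univ.filter fun j : Fin (2 * k) => y i j ≠ 0).card} d := by
  classical
  -- the Gray map on words, as a ZMod p-linear map
  set Φ : (Fin n → Rbase p k) →ₗ[ZMod p] (Fin n → Fin (2 * k) → ZMod p) :=
    LinearMap.pi (fun i => φL.comp (LinearMap.proj i)) with hΦdef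
  have hΦapp : ∀ c : Fin n → Rbase p k, Φ c = fun i j => φL (c i) j := by
    intro c; funext i j; rfl
  have hΦinj : Function.Injective Φ := by
    intro a b hab
    funext i
    apply hφ
    exact congrFun hab i
  set C' : Submodule (ZMod p) (Fin n → Rbase p k) := C.restrictScalars (ZMod p) with hC'
  refine ⟨Submodule.map Φ C', ?_, ?_, ?_⟩
  · ext y
    simp only [Submodule.map_coe, Set.mem_image, hC', Submodule.coe_restrictScalars,
      SetLike.mem_coe]
    constructor
    · rintro ⟨c, hc, rfl⟩; exact ⟨c, hc, (hΦapp c).symm⟩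
    · rintro ⟨c, hc, rfl⟩; exact ⟨c, hc, hΦapp c⟩
  · -- dimension
    have hfin : Finite C' := by
      have : Nat.card C' = p ^ m := hcard
      exact Nat.finite_of_card_ne_zero (by
        rw [this]; exact pow_ne_zero _ (Fact.out (p := p.Prime)).ne_zero)
    have e : C' ≃ₗ[ZMod p] Submodule.map Φ C' := Submodule.equivMapOfInjective Φ hΦinj C'
    have hfin2 : Finite (Submodule.map Φ C') := Finite.of_equiv _ e.toEquiv
    have : Module.Finite (ZMod p) (Submodule.map Φ C') := Module.Finite.of_finite
    haveI : Fintype (Submodule.map Φ C') := Fintype.ofFinite _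
    have hcard2 : Fintype.card (Submodule.map Φ C') = p ^ m := by
      rw [← Nat.card_eq_fintype_card, Nat.card_congr e.toEquiv.symm]
      exact hcard
    have := Module.card_eq_pow_finrank (K := ZMod p) (V := Submodule.map Φ C')
    rw [ZMod.card, hcard2] at this
    exact (Nat.pow_right_injective (Fact.out (p := p.Prime)).two_le this.symm)
  · -- min distance
    have hset : {w | ∃ y ∈ Submodule.map Φ C', y ≠ 0 ∧
        w = ∑ i : Fin n, (Finset.univ.filter fun j : Fin (2 * k) => y i j ≠ 0).card}
        = {w | ∃ c ∈ C, c ≠ 0 ∧ w = grayWt p k n φL c} := by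
      ext w
      simp only [Set.mem_setOf_eq]
      constructor
      · rintro ⟨y, hy, hy0, rfl⟩
        obtain ⟨c, hc, rfl⟩ := hy
        refine ⟨c, hc, ?_, ?_⟩
        · rintro rfl; exact hy0 (map_zero Φ)
        · simp [grayWt, hΦapp]
      · rintro ⟨c, hc, hc0, rfl⟩
        refine ⟨Φ c, Submodule.mem_map_of_mem hc, ?_, ?_⟩
        · intro h; exact hc0 (hΦinj (by rw [h, map_zero]))
        · simp [grayWt, hΦapp]
    rw [hset]
    exact hd
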